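/- For every N ≥ 2 and every 1 ≤ i ≤ N−1 the tensor Z_N(x;y) of the U_t(sl-hat_{n+1|m}) vertex model satisfies the exchange relations: Ř_i(x_{i+1}/x_i) Z_N(x;y) = Z_N(x_1,…,x_{i+1},x_i,…,x_N; y) Ř_{N+i}(x_{i+1}/x_i), and Z_N(x;y) Ř_i(y_i/y_{i+1}) = Ř_{N+i}(y_i/y_{i+1}) Z_N(x; y_1,…,y_{i+1},y_i,…,y_N). -/

import Mathlib

open scoped BigOperators

noncomputable section

namespace ConicVertex

/-- The field `ℚ(q,t,x_0,x_1,…)` of rational functions in countably many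
algebraically independent indeterminates. -/
abbrev K : Type := FractionRing (MvPolynomial ℕ ℚ)

/-- The `i`-th indeterminate, viewed inside the fraction field. -/
def vr (i : ℕ) : K := algebraMap (MvPolynomial ℕ ℚ) K (MvPolynomial.X i)

/-- The Macdonald parameter `q`. -/
def qv : K := vr 0

/-- The Macdonald parameter `t`. -/
def tv : K := vr 1

/-- `ζ(u) = (1-qu)(1-t⁻¹u)/((1-u)(1-qt⁻¹u))`. -/
def zetaF (u : K) : K := ((1 - qv * u) * (1 - tv⁻¹ * u)) / ((1 - u) * (1 - qv * tv⁻¹ * u))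

/-- Functions of the variables `x_0, x_1, …` (a function of `k` variables only
reads the first `k` arguments). -/
abbrev SF : Type := (ℕ → K) → K

/-- The `a`-th smallest element of the finite set `S ⊆ ℕ`. -/
def sortedIdx (S : Finset ℕ) (a : ℕ) : ℕ := (S.sort (· ≤ ·)).getD a 0

/-- The shuffle product of a function `F` of `k` variables with a function `G`
of `l` variables:
`(F*G)(x_1…x_{k+l}) = Σ_{S, |S|=k} F(x_S) G(x_{Sᶜ}) Π_{i∈S,j∈Sᶜ} ζ(x_i/x_j)`. -/
def shuffleMul (k l : ℕ) (F G : SF) : SF := fun x =>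
  ∑ S ∈ Finset.powersetCard k (Finset.range (k + l)),
    F (fun a => x (sortedIdx S a)) *
      G (fun a => x (sortedIdx (Finset.range (k + l) \ S) a)) *
      ∏ i ∈ S, ∏ j ∈ Finset.range (k + l) \ S, zetaF (x i / x j)

/-- Iterated (left-to-right) shuffle product of a list of functions together
with their arities; returns the total arity and the product. -/
def shuffleListProd : List (ℕ × SF) → ℕ × SF
  | [] => (0, fun _ => 1)
  | (k, F) :: rest =>
      let p := shuffleListProd rest
      (k + p.1, shuffleMul k p.1 F p.2)

/-- The power-sum–like elements `S_k` of the shuffle algebra. -/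
def Sel (k : ℕ) : SF := fun x =>
  ((1 - qv) ^ k * (1 - tv⁻¹) ^ k / ((tv - qv) ^ k * (1 - (tv ^ k)⁻¹))) *
    ∑ σ : Equiv.Perm (Fin k),
      (fun y : ℕ → K =>
        ((∑ j ∈ Finset.range k, (qv / tv) ^ j * y j / y 0) /
            ∏ j ∈ Finset.range (k - 1), (1 - qv / tv * (y (j + 1) / y j))) *
          ∏ i ∈ Finset.range k, ∏ j ∈ Finset.range k,
            if i < j then zetaF (y i / y j) else 1)
        (fun a => if h : a < k then x (σ ⟨a, h⟩).val else x a)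

/-- The factorised elements `E_k(p)` of the shuffle algebra. -/
def Eel (p : K) (k : ℕ) : SF := fun x =>
  ∏ i ∈ Finset.range k, ∏ j ∈ Finset.range k,
    if i < j then
      ((x i - p * x j) * (x i - p⁻¹ * x j)) /
        ((x i - qv * tv⁻¹ * x j) * (x i - tv * qv⁻¹ * x j))
    else 1

/-- The Izergin-determinant elements `H_k(q_a)` (for the permutation `(a,b,c)`
of `(1,2,3)`). -/
def Hel (qa qb qc : K) (k : ℕ) : SF := fun x =>
  (qa * qv * tv⁻¹) ^ (k * (k - 1) / 2) *
    ((∏ i ∈ Finset.range k, ∏ j ∈ Finset.range k, ((x i - qb * x j) * (x j - qc * x i))) /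
        ∏ i ∈ Finset.range k, ∏ j ∈ Finset.range k,
          (if i = j then 1 else (x i - x j) * (x i - qv * tv⁻¹ * x j))) *
    Matrix.det (Matrix.of fun i j : Fin k =>
      1 / ((x i.val - qb * x j.val) * (x j.val - qc * x i.val)))

/-! ### The `U_t(sl-hat_{n+1|m})` vertex model

Colours are `0,…,n+m` (`d = n+m`); colours `1,…,n` are bosonic, colours
`n+1,…,n+m` fermionic, and colours are ordered `1 ≺ 2 ≺ ⋯ ≺ n+m ≺ 0`. -/

/-- Words of length `M` in the colours `0,…,d`, indexing the basis of `V^{⊗M}`. -/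
abbrev Word (d M : ℕ) := Fin M → Fin (d + 1)

/-- The position of a colour in the order `1 ≺ 2 ≺ ⋯ ≺ n+m ≺ 0`. -/
def ordC (d : ℕ) (a : Fin (d + 1)) : ℕ := if a.val = 0 then d + 1 else a.val

/-- Matrix elements of the `R`-check matrix `Ř(u)` on `V ⊗ V`:
`Rent n d u a b c e = ⟨a,b| Ř(u) |c,e⟩`. -/
def Rent (n d : ℕ) (u : K) (a b c e : Fin (d + 1)) : K :=
  if a = b ∧ b = c ∧ c = e then (if n < a.val then (u - tv) / (1 - tv * u) else 1)
  else if a = c ∧ b = e ∧ ordC d a < ordC d b then (1 - tv) / (1 - tv * u)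
  else if a = c ∧ b = e ∧ ordC d b < ordC d a then (1 - tv) * u / (1 - tv * u)
  else if a = e ∧ b = c ∧ ordC d a < ordC d b then tv * (1 - u) / (1 - tv * u)
  else if a = e ∧ b = c ∧ ordC d b < ordC d a then (1 - u) / (1 - tv * u)
  else 0

/-- `Ř_p(u)` acting on tensor factors `p, p+1` (0-based) of `V^{⊗M}`. -/
def Rop (n d M : ℕ) (p : ℕ) (u : K) : Matrix (Word d M) (Word d M) K :=
  Matrix.of fun α β =>
    if hp : p + 1 < M then
      if ∀ j : Fin M, j.val ≠ p → j.val ≠ p + 1 → α j = β j then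
        Rent n d u (α ⟨p, by omega⟩) (α ⟨p + 1, hp⟩) (β ⟨p, by omega⟩) (β ⟨p + 1, hp⟩)
      else 0
    else 0

/-- The column operator `C_b = Ř_{M+b-1}(x_M/y_b) ⋯ Ř_b(x_1/y_b)` (in 0-based
conventions) on `V^{⊗(M+Kc)}`. -/
def Cop (n d M Kc : ℕ) (x y : ℕ → K) (b : ℕ) :
    Matrix (Word d (M + Kc)) (Word d (M + Kc)) K :=
  (((List.range M).reverse).map fun a => Rop n d (M + Kc) (b + a) (x a / y b)).prod

/-- The rectangular lattice tensor `Z_{M,Kc}(x;y) = C_1 C_2 ⋯ C_{Kc}`. -/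
def Zop (n d M Kc : ℕ) (x y : ℕ → K) :
    Matrix (Word d (M + Kc)) (Word d (M + Kc)) K :=
  ((List.range Kc).map fun b => Cop n d M Kc x y b).prod

/-- `0^N ⊗ γ`. -/
def pad0 (d N : ℕ) (γ : Word d N) : Word d (N + N) := fun j =>
  if h : j.val < N then 0 else γ ⟨j.val - N, by have := j.isLt; omega⟩

/-- `⟨γ|W_N(x;y)|δ⟩ = ⟨0^N ⊗ γ| Z_N(x;y) |0^N ⊗ δ⟩`. -/
def Wop (n d N : ℕ) (x y : ℕ → K) : Matrix (Word d N) (Word d N) K :=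
  Matrix.of fun γ δ => Zop n d N N x y (pad0 d N γ) (pad0 d N δ)

/-- `W_N(x) = W_N(x_1,…,x_N; q x_1,…,q x_N)`. -/
def Wx (n d N : ℕ) (x : ℕ → K) : Matrix (Word d N) (Word d N) K :=
  Wop n d N x fun a => qv * x a

/-- The loop weights: `c_0 = z_0`, `c_j = z_j` for bosonic `j`, `c_{n+j} = -w_j`
for fermionic colours. -/
def coefZW (n : ℕ) (z w : ℕ → K) (a : ℕ) : K := if a ≤ n then z a else -w (a - n)

/-- The graded trace `T_N(x;z,w)`. -/
def Tfun (n m N : ℕ) (x z w : ℕ → K) : K :=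
  ∑ α : Word (n + m) N, (∏ i : Fin N, coefZW n z w (α i).val) * Wx n (n + m) N x α α

/-- Generic spectral parameters: `x_{a+1} := vr (2+a)` (0-based). -/
def xg (a : ℕ) : K := vr (2 + a)

/-- Generic column spectral parameters `y`. -/
def yg (N b : ℕ) : K := vr (2 + N + b)

/-- Generic bosonic weights `z_0,…,z_n`. -/
def zg (N j : ℕ) : K := vr (2 + N + j)

/-- Generic fermionic weights `w_1,…,w_m`. -/
def wg (N n j : ℕ) : K := vr (2 + N + n + 1 + j)

/-- Swap the values of `x` at `a` and `b`. -/
def swapF (x : ℕ → K) (a b : ℕ) : ℕ → K := fun c => if c = a then x b else if c = b then x a else x c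

end ConicVertex

namespace ConicVertex

lemma ordC_inj {d : ℕ} {a b : Fin (d+1)} (h : ordC d a = ordC d b) : a = b := by
  unfold ordC at h
  have ha := a.isLt; have hb := b.isLt
  split_ifs at h <;> (apply Fin.ext; omega)

lemma ord_facts {d : ℕ} {x y : Fin (d+1)} (h : ordC d x < ordC d y) :
    (¬ x = y) ∧ (¬ y = x) ∧ ¬ ordC d y < ordC d x :=
  ⟨fun he => by rw [he] at h; omega, fun he => by rw [he] at h; omega, by omega⟩

/-- diagonal coefficient of the braid matrix -/

def Dd (n d : ℕ) (a b : Fin (d+1)) : K :=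
  if a = b then (if n < a.val then -tv else 1)
  else if ordC d a < ordC d b then 1 - tv else 0

/-- exchange coefficient of the braid matrix -/

def Ee (d : ℕ) (c e : Fin (d+1)) : K := if ordC d c < ordC d e then 1 else tv

abbrev S3 (d : ℕ) := Fin (d+1) × Fin (d+1) × Fin (d+1)

def T1 (n d : ℕ) : Matrix (S3 d) (S3 d) K :=
  Matrix.of fun x y =>
    Dd n d x.1 x.2.1 * (if y = x then 1 else 0) +
    (if x.1 = x.2.1 then 0 else
      Ee d x.2.1 x.1 * (if y = (x.2.1, x.1, x.2.2) then 1 else 0))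

def T2 (n d : ℕ) : Matrix (S3 d) (S3 d) K :=
  Matrix.of fun x y =>
    Dd n d x.2.1 x.2.2 * (if y = x then 1 else 0) +
    (if x.2.1 = x.2.2 then 0 else
      Ee d x.2.2 x.2.1 * (if y = (x.1, x.2.2, x.2.1) then 1 else 0))

lemma T1_mul_apply (n d : ℕ) (M : Matrix (S3 d) (S3 d) K) (a b c : Fin (d+1)) (w : S3 d) :
    (T1 n d * M) (a,b,c) w =
      Dd n d a b * M (a,b,c) w + (if a = b then 0 else Ee d b a * M (b,a,c) w) := by
  rw [Matrix.mul_apply]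
  by_cases hab : a = b <;>
    simp [T1, hab, add_mul, ite_mul, mul_ite, zero_mul, mul_zero, mul_assoc,
      Finset.sum_add_distrib, Finset.sum_ite_eq, Finset.sum_ite_eq']

lemma T2_mul_apply (n d : ℕ) (M : Matrix (S3 d) (S3 d) K) (a b c : Fin (d+1)) (w : S3 d) :
    (T2 n d * M) (a,b,c) w =
      Dd n d b c * M (a,b,c) w + (if b = c then 0 else Ee d c b * M (a,c,b) w) := by
  rw [Matrix.mul_apply]
  by_cases hbc : b = c <;>
    simp [T2, hbc, add_mul, ite_mul, mul_ite, zero_mul, mul_zero, mul_assoc,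
      Finset.sum_add_distrib, Finset.sum_ite_eq, Finset.sum_ite_eq']

lemma T1_apply (n d : ℕ) (a b c : Fin (d+1)) (w : S3 d) :
    T1 n d (a,b,c) w = Dd n d a b * (if w = (a,b,c) then 1 else 0) +
      (if a = b then 0 else Ee d b a * (if w = (b,a,c) then 1 else 0)) := rfl

lemma T2_apply (n d : ℕ) (a b c : Fin (d+1)) (w : S3 d) :
    T2 n d (a,b,c) w = Dd n d b c * (if w = (a,b,c) then 1 else 0) +
      (if b = c then 0 else Ee d c b * (if w = (a,c,b) then 1 else 0)) := rfl

lemma one_apply3 (d : ℕ) (x w : S3 d) :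
    (1 : Matrix (S3 d) (S3 d) K) x w = if w = x then 1 else 0 := by
  rw [Matrix.one_apply]; simp [eq_comm]

lemma hecke1 (n d : ℕ) : T1 n d * T1 n d = (1 - tv) • T1 n d + tv • (1 : Matrix (S3 d) (S3 d) K) := by
  ext ⟨a,b,c⟩ w
  rw [Matrix.add_apply, Matrix.smul_apply, Matrix.smul_apply, T1_mul_apply, one_apply3]
  rcases lt_trichotomy (ordC d a) (ordC d b) with hab | hab | hab
  · obtain ⟨ne1, ne2, nl1⟩ := ord_facts hab
    simp only [T1_apply, Dd, Ee, smul_eq_mul, hab, ne1, ne2, nl1, if_true, if_false,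
      ite_true, ite_false, if_neg, if_pos, eq_self_iff_true, not_false_iff]
    ring
  · obtain rfl : a = b := ordC_inj hab
    by_cases hf : n < a.val <;>
      simp only [T1_apply, Dd, smul_eq_mul, hf, if_true, if_false, ite_true, ite_false,
        eq_self_iff_true, not_true, if_pos] <;> ring
  · obtain ⟨ne2, ne1, nl1⟩ := ord_facts hab
    simp only [T1_apply, Dd, Ee, smul_eq_mul, hab, ne1, ne2, nl1, if_true, if_false,
      ite_true, ite_false, eq_self_iff_true, not_false_iff]
    ring

lemma hecke2 (n d : ℕ) : T2 n d * T2 n d = (1 - tv) • T2 n d + tv • (1 : Matrix (S3 d) (S3 d) K) := by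
  ext ⟨a,b,c⟩ w
  rw [Matrix.add_apply, Matrix.smul_apply, Matrix.smul_apply, T2_mul_apply, one_apply3]
  rcases lt_trichotomy (ordC d b) (ordC d c) with hbc | hbc | hbc
  · obtain ⟨ne1, ne2, nl1⟩ := ord_facts hbc
    simp only [T2_apply, Dd, Ee, smul_eq_mul, hbc, ne1, ne2, nl1, if_true, if_false,
      ite_true, ite_false, eq_self_iff_true, not_false_iff]
    ring
  · obtain rfl : b = c := ordC_inj hbc
    by_cases hf : n < b.val <;>
      simp only [T2_apply, Dd, smul_eq_mul, hf, if_true, if_false, ite_true, ite_false,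
        eq_self_iff_true, not_true, if_pos] <;> ring
  · obtain ⟨ne2, ne1, nl1⟩ := ord_facts hbc
    simp only [T2_apply, Dd, Ee, smul_eq_mul, hbc, ne1, ne2, nl1, if_true, if_false,
      ite_true, ite_false, eq_self_iff_true, not_false_iff]
    ring

lemma braid (n d : ℕ) : T1 n d * T2 n d * T1 n d = T2 n d * T1 n d * T2 n d := by
  ext ⟨a,b,c⟩ w
  simp only [mul_assoc, T1_mul_apply, T2_mul_apply, T1_apply, T2_apply]
  rcases lt_trichotomy (ordC d a) (ordC d b) with hab | hab | hab
  · obtain ⟨ne1, ne2, nl1⟩ := ord_facts hab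
    rcases lt_trichotomy (ordC d b) (ordC d c) with hbc | hbc | hbc
    · have hac := Nat.lt_trans hab hbc
      obtain ⟨ne3, ne4, nl2⟩ := ord_facts hbc
      obtain ⟨ne5, ne6, nl3⟩ := ord_facts hac
      simp only [Dd, Ee, hab, hbc, hac, ne1, ne2, ne3, ne4, ne5, ne6, nl1, nl2, nl3,
        if_true, if_false, ite_true, ite_false, eq_self_iff_true, not_false_iff]
      ring
    · obtain rfl : b = c := ordC_inj hbc
      by_cases hf : n < b.val <;>
        simp only [Dd, Ee, hab, ne1, ne2, nl1, hf, if_true, if_false, ite_true, ite_false,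
          eq_self_iff_true, not_true, not_false_iff] <;> ring
    · obtain ⟨ne3, ne4, nl2⟩ := ord_facts hbc
      rcases lt_trichotomy (ordC d a) (ordC d c) with hac | hac | hac
      · obtain ⟨ne5, ne6, nl3⟩ := ord_facts hac
        simp only [Dd, Ee, hab, hbc, hac, ne1, ne2, ne3, ne4, ne5, ne6, nl1, nl2, nl3,
          if_true, if_false, ite_true, ite_false, eq_self_iff_true, not_false_iff]
        ring
      · obtain rfl : a = c := ordC_inj hac
        by_cases hf : n < a.val <;>
          simp only [Dd, Ee, hab, hbc, ne1, ne2, ne3, ne4, nl1, nl2, hf, if_true, if_false,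
            ite_true, ite_false, eq_self_iff_true, not_true, not_false_iff] <;> ring
      · obtain ⟨ne5, ne6, nl3⟩ := ord_facts hac
        simp only [Dd, Ee, hab, hbc, hac, ne1, ne2, ne3, ne4, ne5, ne6, nl1, nl2, nl3,
          if_true, if_false, ite_true, ite_false, eq_self_iff_true, not_false_iff]
        ring
  · obtain rfl : a = b := ordC_inj hab
    rcases lt_trichotomy (ordC d a) (ordC d c) with hac | hac | hac
    · obtain ⟨ne1, ne2, nl1⟩ := ord_facts hac
      by_cases hf : n < a.val <;>
        simp only [Dd, Ee, hac, ne1, ne2, nl1, hf, if_true, if_false, ite_true, ite_false,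
          eq_self_iff_true, not_true, not_false_iff] <;> ring
    · obtain rfl : a = c := ordC_inj hac
      by_cases hf : n < a.val <;>
        simp only [Dd, Ee, hf, if_true, if_false, ite_true, ite_false,
          eq_self_iff_true, not_true] <;> ring
    · obtain ⟨ne1, ne2, nl1⟩ := ord_facts hac
      by_cases hf : n < a.val <;>
        simp only [Dd, Ee, hac, ne1, ne2, nl1, hf, if_true, if_false, ite_true, ite_false,
          eq_self_iff_true, not_true, not_false_iff] <;> ring
  · obtain ⟨ne2, ne1, nl1⟩ := ord_facts hab
    rcases lt_trichotomy (ordC d b) (ordC d c) with hbc | hbc | hbc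
    · obtain ⟨ne3, ne4, nl2⟩ := ord_facts hbc
      rcases lt_trichotomy (ordC d a) (ordC d c) with hac | hac | hac
      · obtain ⟨ne5, ne6, nl3⟩ := ord_facts hac
        simp only [Dd, Ee, hab, hbc, hac, ne1, ne2, ne3, ne4, ne5, ne6, nl1, nl2, nl3,
          if_true, if_false, ite_true, ite_false, eq_self_iff_true, not_false_iff]
        ring
      · obtain rfl : a = c := ordC_inj hac
        by_cases hf : n < a.val <;>
          simp only [Dd, Ee, hab, hbc, ne1, ne2, ne3, ne4, nl1, nl2, hf, if_true, if_false,
            ite_true, ite_false, eq_self_iff_true, not_true, not_false_iff] <;> ring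
      · obtain ⟨ne6, ne5, nl3⟩ := ord_facts hac
        simp only [Dd, Ee, hab, hbc, hac, ne1, ne2, ne3, ne4, ne5, ne6, nl1, nl2, nl3,
          if_true, if_false, ite_true, ite_false, eq_self_iff_true, not_false_iff]
        ring
    · obtain rfl : b = c := ordC_inj hbc
      by_cases hf : n < b.val <;>
        simp only [Dd, Ee, hab, ne1, ne2, nl1, hf, if_true, if_false, ite_true, ite_false,
          eq_self_iff_true, not_true, not_false_iff] <;> ring
    · have hca := Nat.lt_trans hbc hab
      obtain ⟨ne4, ne3, nl2⟩ := ord_facts hbc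
      obtain ⟨ne6, ne5, nl3⟩ := ord_facts hca
      simp only [Dd, Ee, hab, hbc, hca, ne1, ne2, ne3, ne4, ne5, ne6, nl1, nl2, nl3,
        if_true, if_false, ite_true, ite_false, eq_self_iff_true, not_false_iff]
      ring

def aF (u : K) : K := (1 - tv) * u / (1 - tv * u)

def bF (u : K) : K := (1 - u) / (1 - tv * u)

lemma Rent_decomp (n d : ℕ) (u : K) (hu : 1 - tv * u ≠ 0) (a b c e : Fin (d+1)) :
    Rent n d u a b c e = aF u * (if c = a ∧ e = b then 1 else 0) +
      bF u * (Dd n d a b * (if c = a ∧ e = b then 1 else 0) +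
        (if a = b then 0 else Ee d b a * (if c = b ∧ e = a then 1 else 0))) := by
  unfold Rent aF bF
  rcases lt_trichotomy (ordC d a) (ordC d b) with hab | hab | hab
  · obtain ⟨ne1, ne2, nl1⟩ := ord_facts hab
    rcases eq_or_ne c a with rfl | h1
    · rcases eq_or_ne e b with rfl | h2
      · simp [Dd, Ee, ne1, ne2, nl1, hab]; field_simp; ring
      · rcases eq_or_ne e c with rfl | h3
        · simp [Dd, Ee, ne1, ne2, nl1, hab, h2, Ne.symm h2]
        · simp [Dd, Ee, ne1, ne2, nl1, hab, h2, Ne.symm h2, h3, Ne.symm h3]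
    · rcases eq_or_ne e b with rfl | h2
      · rcases eq_or_ne c e with rfl | h3
        · simp [Dd, Ee, ne1, ne2, nl1, hab, h1, Ne.symm h1]
        · simp [Dd, Ee, ne1, ne2, nl1, hab, h1, Ne.symm h1, h3, Ne.symm h3]
      · rcases eq_or_ne c b with rfl | h3
        · rcases eq_or_ne e a with rfl | h4
          · simp [Dd, Ee, ne1, ne2, nl1, hab, h1, Ne.symm h1, h2, Ne.symm h2]
            field_simp
          · simp [Dd, Ee, ne1, ne2, nl1, hab, h1, Ne.symm h1, h2, Ne.symm h2, h4, Ne.symm h4]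
        · rcases eq_or_ne e a with rfl | h4
          · simp [Dd, Ee, ne1, ne2, nl1, hab, h1, Ne.symm h1, h2, Ne.symm h2, h3, Ne.symm h3]
          · simp [Dd, Ee, ne1, ne2, nl1, hab, h1, Ne.symm h1, h2, Ne.symm h2, h3, Ne.symm h3,
              h4, Ne.symm h4]
  · obtain rfl : a = b := ordC_inj hab
    by_cases hf : n < a.val
    · rcases eq_or_ne c a with rfl | h1
      · rcases eq_or_ne e c with rfl | h2
        · simp [Dd, hf]; field_simp; ring
        · simp [Dd, Ee, h2, Ne.symm h2]
      · rcases eq_or_ne e a with rfl | h2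
        · simp [Dd, Ee, h1, Ne.symm h1]
        · simp [Dd, Ee, h1, Ne.symm h1, h2, Ne.symm h2]
    · rcases eq_or_ne c a with rfl | h1
      · rcases eq_or_ne e c with rfl | h2
        · simp [Dd, hf]; field_simp; ring
        · simp [Dd, Ee, h2, Ne.symm h2]
      · rcases eq_or_ne e a with rfl | h2
        · simp [Dd, Ee, h1, Ne.symm h1]
        · simp [Dd, Ee, h1, Ne.symm h1, h2, Ne.symm h2]
  · obtain ⟨ne2, ne1, nl1⟩ := ord_facts hab
    rcases eq_or_ne c a with rfl | h1
    · rcases eq_or_ne e b with rfl | h2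
      · simp [Dd, Ee, ne1, ne2, nl1, hab]
      · rcases eq_or_ne e c with rfl | h3
        · simp [Dd, Ee, ne1, ne2, nl1, hab, h2, Ne.symm h2]
        · simp [Dd, Ee, ne1, ne2, nl1, hab, h2, Ne.symm h2, h3, Ne.symm h3]
    · rcases eq_or_ne e b with rfl | h2
      · rcases eq_or_ne c e with rfl | h3
        · simp [Dd, Ee, ne1, ne2, nl1, hab, h1, Ne.symm h1]
        · simp [Dd, Ee, ne1, ne2, nl1, hab, h1, Ne.symm h1, h3, Ne.symm h3]
      · rcases eq_or_ne c b with rfl | h3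
        · rcases eq_or_ne e a with rfl | h4
          · simp [Dd, Ee, ne1, ne2, nl1, hab, h1, Ne.symm h1, h2, Ne.symm h2]
          · simp [Dd, Ee, ne1, ne2, nl1, hab, h1, Ne.symm h1, h2, Ne.symm h2, h4, Ne.symm h4]
        · rcases eq_or_ne e a with rfl | h4
          · simp [Dd, Ee, ne1, ne2, nl1, hab, h1, Ne.symm h1, h2, Ne.symm h2, h3, Ne.symm h3]
          · simp [Dd, Ee, ne1, ne2, nl1, hab, h1, Ne.symm h1, h2, Ne.symm h2, h3, Ne.symm h3,
              h4, Ne.symm h4]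

def Emb3 (d M p : ℕ) (m : Matrix (S3 d) (S3 d) K) : Matrix (Word d M) (Word d M) K :=
  Matrix.of fun γ δ =>
    if hp : p + 2 < M then
      if ∀ j : Fin M, j.val ≠ p → j.val ≠ p + 1 → j.val ≠ p + 2 → γ j = δ j then
        m (γ ⟨p, by omega⟩, γ ⟨p + 1, by omega⟩, γ ⟨p + 2, hp⟩)
          (δ ⟨p, by omega⟩, δ ⟨p + 1, by omega⟩, δ ⟨p + 2, hp⟩)
      else 0
    else 0

section EmbMul
variable {d M p : ℕ}

/-- patch a window triple into a word -/

def patch3 (hp : p + 2 < M) (γ : Word d M) (y : S3 d) : Word d M := fun j =>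
  if j.val = p then y.1 else if j.val = p + 1 then y.2.1 else if j.val = p + 2 then y.2.2 else γ j

def res3 (hp : p + 2 < M) (ε : Word d M) : S3 d :=
  (ε ⟨p, by omega⟩, ε ⟨p + 1, by omega⟩, ε ⟨p + 2, hp⟩)

lemma patch3_agree (hp : p + 2 < M) (γ : Word d M) (y : S3 d) :
    ∀ j : Fin M, j.val ≠ p → j.val ≠ p + 1 → j.val ≠ p + 2 → γ j = patch3 hp γ y j := by
  intro j h1 h2 h3
  simp [patch3, h1, h2, h3]

lemma res3_patch3 (hp : p + 2 < M) (γ : Word d M) (y : S3 d) :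
    res3 hp (patch3 hp γ y) = y := by
  obtain ⟨y1, y2, y3⟩ := y
  have e1 : p + 1 ≠ p := by omega
  have e2 : p + 2 ≠ p := by omega
  have e3 : p + 2 ≠ p + 1 := by omega
  simp [res3, patch3, e1, e2, e3]

lemma patch3_res3 (hp : p + 2 < M) (γ ε : Word d M)
    (h : ∀ j : Fin M, j.val ≠ p → j.val ≠ p + 1 → j.val ≠ p + 2 → γ j = ε j) :
    patch3 hp γ (res3 hp ε) = ε := by
  funext j
  unfold patch3 res3
  split_ifs with hj1 hj2 hj3
  · show ε ⟨p, by omega⟩ = ε j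
    exact congrArg ε (Fin.val_injective hj1.symm)
  · show ε ⟨p + 1, by omega⟩ = ε j
    exact congrArg ε (Fin.val_injective hj2.symm)
  · show ε ⟨p + 2, hp⟩ = ε j
    exact congrArg ε (Fin.val_injective hj3.symm)
  · exact h j hj1 hj2 hj3

lemma sum_patch3 (hp : p + 2 < M) (γ : Word d M) (g : S3 d → K) :
    ∑ ε : Word d M,
      (if ∀ j : Fin M, j.val ≠ p → j.val ≠ p + 1 → j.val ≠ p + 2 → γ j = ε j then g (res3 hp ε)
        else 0) = ∑ y : S3 d, g y := by
  classical
  refine (Finset.sum_of_injOn (patch3 hp γ) ?_ ?_ ?_ ?_).symm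
  · intro y _ y' _ hyy
    rw [← res3_patch3 hp γ y, ← res3_patch3 hp γ y', hyy]
  · intro y _; exact Finset.mem_univ _
  · intro ε _ hε
    rw [if_neg]
    intro hP
    exact hε ⟨res3 hp ε, by simp, patch3_res3 hp γ ε hP⟩
  · intro y _
    rw [if_pos (patch3_agree hp γ y), res3_patch3]

lemma Emb3_mul (m₁ m₂ : Matrix (S3 d) (S3 d) K) :
    Emb3 d M p m₁ * Emb3 d M p m₂ = Emb3 d M p (m₁ * m₂) := by
  ext γ δ
  rw [Matrix.mul_apply]
  by_cases hp : p + 2 < M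
  · simp only [Emb3, Matrix.of_apply, dif_pos hp]
    by_cases hPD : ∀ j : Fin M, j.val ≠ p → j.val ≠ p + 1 → j.val ≠ p + 2 → γ j = δ j
    · rw [if_pos hPD, Matrix.mul_apply]
      have hterm : ∀ ε : Word d M,
          ((if ∀ j : Fin M, j.val ≠ p → j.val ≠ p + 1 → j.val ≠ p + 2 → γ j = ε j then
              m₁ (res3 hp γ) (res3 hp ε) else 0) *
            (if ∀ j : Fin M, j.val ≠ p → j.val ≠ p + 1 → j.val ≠ p + 2 → ε j = δ j then
              m₂ (res3 hp ε) (res3 hp δ) else 0)) =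
          (if ∀ j : Fin M, j.val ≠ p → j.val ≠ p + 1 → j.val ≠ p + 2 → γ j = ε j then
            m₁ (res3 hp γ) (res3 hp ε) * m₂ (res3 hp ε) (res3 hp δ) else 0) := by
        intro ε
        by_cases hA : ∀ j : Fin M, j.val ≠ p → j.val ≠ p + 1 → j.val ≠ p + 2 → γ j = ε j
        · rw [if_pos hA, if_pos hA, if_pos fun j h1 h2 h3 => ((hA j h1 h2 h3).symm).trans (hPD j h1 h2 h3)]
        · simp [hA]
      calc (∑ ε : Word d M, _) = ∑ ε : Word d M,
            (if ∀ j : Fin M, j.val ≠ p → j.val ≠ p + 1 → j.val ≠ p + 2 → γ j = ε j then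
              m₁ (res3 hp γ) (res3 hp ε) * m₂ (res3 hp ε) (res3 hp δ) else 0) :=
          Finset.sum_congr rfl fun ε _ => hterm ε
        _ = ∑ y : S3 d, m₁ (res3 hp γ) y * m₂ y (res3 hp δ) :=
          sum_patch3 hp γ (fun y => m₁ (res3 hp γ) y * m₂ y (res3 hp δ))
    · rw [if_neg hPD]
      apply Finset.sum_eq_zero
      intro ε _
      by_cases hA : ∀ j : Fin M, j.val ≠ p → j.val ≠ p + 1 → j.val ≠ p + 2 → γ j = ε j
      · have hB : ¬ ∀ j : Fin M, j.val ≠ p → j.val ≠ p + 1 → j.val ≠ p + 2 → ε j = δ j :=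
          fun hB => hPD fun j h1 h2 h3 => (hA j h1 h2 h3).trans (hB j h1 h2 h3)
        simp [hB]
      · simp [hA]
  · simp [Emb3, hp]

end EmbMul

lemma Rop_emb1 {n d M p : ℕ} {u : K} (hp : p + 2 < M) (hu : 1 - tv * u ≠ 0) :
    Rop n d M p u = Emb3 d M p (aF u • 1 + bF u • T1 n d) := by
  ext γ δ
  simp only [Rop, Emb3, Matrix.of_apply]
  rw [dif_pos (by omega : p + 1 < M), dif_pos hp]
  by_cases h3 : ∀ j : Fin M, j.val ≠ p → j.val ≠ p + 1 → j.val ≠ p + 2 → γ j = δ j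
  · rw [if_pos h3]
    by_cases h22 : γ ⟨p + 2, hp⟩ = δ ⟨p + 2, hp⟩
    · have h2 : ∀ j : Fin M, j.val ≠ p → j.val ≠ p + 1 → γ j = δ j := by
        intro j hj1 hj2
        by_cases hj3 : j.val = p + 2
        · have : j = ⟨p + 2, hp⟩ := Fin.val_injective hj3
          rw [this]; exact h22
        · exact h3 j hj1 hj2 hj3
      rw [if_pos h2, Rent_decomp n d u hu, Matrix.add_apply, Matrix.smul_apply,
        Matrix.smul_apply, one_apply3, T1_apply, smul_eq_mul, smul_eq_mul]
      simp [Prod.mk.injEq, h22]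
    · have h2 : ¬ ∀ j : Fin M, j.val ≠ p → j.val ≠ p + 1 → γ j = δ j := by
        intro h2
        exact h22 (h2 ⟨p + 2, hp⟩ (by simp) (by simp))
      rw [if_neg h2, Matrix.add_apply, Matrix.smul_apply, Matrix.smul_apply, one_apply3,
        T1_apply]
      simp [Prod.mk.injEq, Ne.symm h22]
  · have h2 : ¬ ∀ j : Fin M, j.val ≠ p → j.val ≠ p + 1 → γ j = δ j :=
      fun h2 => h3 fun j hj1 hj2 _ => h2 j hj1 hj2
    rw [if_neg h2, if_neg h3]

lemma Rop_emb2 {n d M p : ℕ} {u : K} (hp : p + 2 < M) (hu : 1 - tv * u ≠ 0) :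
    Rop n d M (p + 1) u = Emb3 d M p (aF u • 1 + bF u • T2 n d) := by
  ext γ δ
  simp only [Rop, Emb3, Matrix.of_apply]
  rw [dif_pos (by omega : p + 1 + 1 < M), dif_pos hp]
  by_cases h3 : ∀ j : Fin M, j.val ≠ p → j.val ≠ p + 1 → j.val ≠ p + 2 → γ j = δ j
  · rw [if_pos h3]
    by_cases h22 : γ ⟨p, by omega⟩ = δ ⟨p, by omega⟩
    · have h2 : ∀ j : Fin M, j.val ≠ p + 1 → j.val ≠ p + 1 + 1 → γ j = δ j := by
        intro j hj1 hj2
        by_cases hj3 : j.val = p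
        · have : j = ⟨p, by omega⟩ := Fin.val_injective hj3
          rw [this]; exact h22
        · exact h3 j hj3 hj1 (by omega)
      rw [if_pos h2, Rent_decomp n d u hu, Matrix.add_apply, Matrix.smul_apply,
        Matrix.smul_apply, one_apply3, T2_apply, smul_eq_mul, smul_eq_mul]
      simp [Prod.mk.injEq, h22]
    · have h2 : ¬ ∀ j : Fin M, j.val ≠ p + 1 → j.val ≠ p + 1 + 1 → γ j = δ j := by
        intro h2
        exact h22 (h2 ⟨p, by omega⟩ (by simp) (by simp; omega))
      rw [if_neg h2, Matrix.add_apply, Matrix.smul_apply, Matrix.smul_apply, one_apply3,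
        T2_apply]
      simp [Prod.mk.injEq, Ne.symm h22]
  · have h2 : ¬ ∀ j : Fin M, j.val ≠ p + 1 → j.val ≠ p + 1 + 1 → γ j = δ j :=
      fun h2 => h3 fun j hj1 hj2 hj3 => h2 j hj2 (by omega)
    rw [if_neg h2, if_neg h3]

lemma baxter_generic {R : Type*} [CommRing R] {M : Type*} [Ring M] [Algebra R M]
    (t : R) (A B : M) (hA : A*A = (1-t)•A + t•(1:M)) (hB : B*B = (1-t)•B + t•(1:M))
    (hbr : A*B*A = B*A*B) (a₁ b₁ a₂ b₂ a₃ b₃ : R)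
    (key : b₁*a₂*a₃ + a₁*a₂*b₃ + (1-t)*(b₁*a₂*b₃) = a₁*b₂*a₃) :
    (a₁•1+b₁•A)*(a₂•1+b₂•B)*(a₃•1+b₃•A) = (a₃•1+b₃•B)*(a₂•1+b₂•A)*(a₁•1+b₁•B) := by
  simp only [mul_add, add_mul, smul_mul_assoc, mul_smul_comm, smul_smul, one_mul, mul_one]
  rw [hA, hB, hbr]
  simp only [smul_add, smul_smul]
  match_scalars <;>
    first
    | linear_combination key
    | linear_combination (-1:R)*key
    | linear_combination a₂*key
    | linear_combination (-a₂:R)*key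
    | ring

lemma small_ybe (n d : ℕ) (u₁ u₃ : K) (h1 : 1 - tv * u₁ ≠ 0) (h2 : 1 - tv * (u₁ * u₃) ≠ 0)
    (h3 : 1 - tv * u₃ ≠ 0) :
    (aF u₁ • 1 + bF u₁ • T1 n d) * (aF (u₁ * u₃) • 1 + bF (u₁ * u₃) • T2 n d) *
        (aF u₃ • 1 + bF u₃ • T1 n d) =
      (aF u₃ • 1 + bF u₃ • T2 n d) * (aF (u₁ * u₃) • 1 + bF (u₁ * u₃) • T1 n d) *
        (aF u₁ • 1 + bF u₁ • T2 n d) := by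
  refine baxter_generic tv (T1 n d) (T2 n d) (hecke1 n d) (hecke2 n d) (braid n d)
    (aF u₁) (bF u₁) (aF (u₁ * u₃)) (bF (u₁ * u₃)) (aF u₃) (bF u₃) ?_
  unfold aF bF
  field_simp
  ring

lemma word_ybe {n d M p : ℕ} {u₁ u₃ : K} (hp : p + 2 < M)
    (h1 : 1 - tv * u₁ ≠ 0) (h2 : 1 - tv * (u₁ * u₃) ≠ 0) (h3 : 1 - tv * u₃ ≠ 0) :
    Rop n d M p u₁ * Rop n d M (p + 1) (u₁ * u₃) * Rop n d M p u₃ =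
      Rop n d M (p + 1) u₃ * Rop n d M p (u₁ * u₃) * Rop n d M (p + 1) u₁ := by
  rw [Rop_emb1 hp h1, Rop_emb2 hp h2, Rop_emb1 hp h3, Rop_emb2 hp h3, Rop_emb1 hp h2,
    Rop_emb2 hp h1, Emb3_mul, Emb3_mul, Emb3_mul, Emb3_mul]
  exact congrArg _ (small_ybe n d u₁ u₃ h1 h2 h3)

lemma Rop_zero_of_cond {n d M p : ℕ} {u : K} (hp : p + 1 < M) {γ ε : Word d M}
    (h : ¬ ∀ j : Fin M, j.val ≠ p → j.val ≠ p + 1 → γ j = ε j) :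
    Rop n d M p u γ ε = 0 := by
  simp only [Rop, Matrix.of_apply, dif_pos hp, if_neg h]

lemma Rop_val {n d M p : ℕ} {u : K} (hp : p + 1 < M) {γ ε : Word d M}
    (h : ∀ j : Fin M, j.val ≠ p → j.val ≠ p + 1 → γ j = ε j) :
    Rop n d M p u γ ε =
      Rent n d u (γ ⟨p, by omega⟩) (γ ⟨p + 1, hp⟩) (ε ⟨p, by omega⟩) (ε ⟨p + 1, hp⟩) := by
  simp only [Rop, Matrix.of_apply, dif_pos hp, if_pos h]

lemma Rop_comm {n d M : ℕ} {p q : ℕ} (u v : K) (hpq : p + 2 ≤ q) (hq : q + 1 < M) :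
    Rop n d M p u * Rop n d M q v = Rop n d M q v * Rop n d M p u := by
  have hp : p + 1 < M := by omega
  ext γ δ
  rw [Matrix.mul_apply, Matrix.mul_apply]
  have e1 : ∑ ε : Word d M, Rop n d M p u γ ε * Rop n d M q v ε δ
      = Rop n d M p u γ (fun j => if j.val = p ∨ j.val = p + 1 then δ j else γ j) *
        Rop n d M q v (fun j => if j.val = p ∨ j.val = p + 1 then δ j else γ j) δ := by
    apply Finset.sum_eq_single
    · intro ε _ hne
      by_cases hA : ∀ j : Fin M, j.val ≠ p → j.val ≠ p + 1 → γ j = ε j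
      · by_cases hB : ∀ j : Fin M, j.val ≠ q → j.val ≠ q + 1 → ε j = δ j
        · exfalso; apply hne; funext j
          by_cases hj : j.val = p ∨ j.val = p + 1
          · rw [if_pos hj]
            exact hB j (by omega) (by omega)
          · rw [if_neg hj]
            push_neg at hj
            exact (hA j hj.1 hj.2).symm
        · rw [Rop_zero_of_cond hq hB, mul_zero]
      · rw [Rop_zero_of_cond hp hA, zero_mul]
    · intro h; exact absurd (Finset.mem_univ _) h
  have e2 : ∑ ε : Word d M, Rop n d M q v γ ε * Rop n d M p u ε δ
      = Rop n d M q v γ (fun j => if j.val = q ∨ j.val = q + 1 then δ j else γ j) *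
        Rop n d M p u (fun j => if j.val = q ∨ j.val = q + 1 then δ j else γ j) δ := by
    apply Finset.sum_eq_single
    · intro ε _ hne
      by_cases hA : ∀ j : Fin M, j.val ≠ q → j.val ≠ q + 1 → γ j = ε j
      · by_cases hB : ∀ j : Fin M, j.val ≠ p → j.val ≠ p + 1 → ε j = δ j
        · exfalso; apply hne; funext j
          by_cases hj : j.val = q ∨ j.val = q + 1
          · rw [if_pos hj]
            exact hB j (by omega) (by omega)
          · rw [if_neg hj]
            push_neg at hj
            exact (hA j hj.1 hj.2).symm
        · rw [Rop_zero_of_cond hp hB, mul_zero]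
      · rw [Rop_zero_of_cond hq hA, zero_mul]
    · intro h; exact absurd (Finset.mem_univ _) h
  rw [e1, e2]
  have vA : Rop n d M p u γ (fun j => if j.val = p ∨ j.val = p + 1 then δ j else γ j) =
      Rent n d u (γ ⟨p, by omega⟩) (γ ⟨p + 1, hp⟩) (δ ⟨p, by omega⟩) (δ ⟨p + 1, hp⟩) := by
    rw [Rop_val hp (fun j h1 h2 => by simp [h1, h2])]
    congr 1 <;> simp
  have vD : Rop n d M p u (fun j => if j.val = q ∨ j.val = q + 1 then δ j else γ j) δ =
      (if ∀ j : Fin M, j.val ≠ p → j.val ≠ p + 1 → j.val ≠ q → j.val ≠ q + 1 → γ j = δ j then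
        Rent n d u (γ ⟨p, by omega⟩) (γ ⟨p + 1, hp⟩) (δ ⟨p, by omega⟩) (δ ⟨p + 1, hp⟩) else 0) := by
    by_cases hOff : ∀ j : Fin M, j.val ≠ p → j.val ≠ p + 1 → j.val ≠ q → j.val ≠ q + 1 → γ j = δ j
    · rw [if_pos hOff, Rop_val hp]
      · congr 1 <;> simp <;> (intro h; exact absurd h (by omega))
      · intro j h1 h2
        by_cases hj : j.val = q ∨ j.val = q + 1
        · rw [if_pos hj]
        · rw [if_neg hj]
          push_neg at hj
          exact hOff j h1 h2 hj.1 hj.2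
    · rw [if_neg hOff, Rop_zero_of_cond hp]
      intro hC
      apply hOff
      intro j h1 h2 h3 h4
      have := hC j h1 h2
      rwa [if_neg (by omega : ¬ (j.val = q ∨ j.val = q + 1))] at this
  have vB : Rop n d M q v γ (fun j => if j.val = q ∨ j.val = q + 1 then δ j else γ j) =
      Rent n d v (γ ⟨q, by omega⟩) (γ ⟨q + 1, hq⟩) (δ ⟨q, by omega⟩) (δ ⟨q + 1, hq⟩) := by
    rw [Rop_val hq (fun j h1 h2 => by simp [h1, h2])]
    congr 1 <;> simp
  have vC : Rop n d M q v (fun j => if j.val = p ∨ j.val = p + 1 then δ j else γ j) δ =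
      (if ∀ j : Fin M, j.val ≠ p → j.val ≠ p + 1 → j.val ≠ q → j.val ≠ q + 1 → γ j = δ j then
        Rent n d v (γ ⟨q, by omega⟩) (γ ⟨q + 1, hq⟩) (δ ⟨q, by omega⟩) (δ ⟨q + 1, hq⟩) else 0) := by
    by_cases hOff : ∀ j : Fin M, j.val ≠ p → j.val ≠ p + 1 → j.val ≠ q → j.val ≠ q + 1 → γ j = δ j
    · rw [if_pos hOff, Rop_val hq]
      · congr 1 <;> simp <;> (intro h; exact absurd h (by omega))
      · intro j h1 h2
        by_cases hj : j.val = p ∨ j.val = p + 1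
        · rw [if_pos hj]
        · rw [if_neg hj]
          push_neg at hj
          exact hOff j hj.1 hj.2 h1 h2
    · rw [if_neg hOff, Rop_zero_of_cond hq]
      intro hC
      apply hOff
      intro j h1 h2 h3 h4
      have := hC j h3 h4
      rwa [if_neg (by omega : ¬ (j.val = p ∨ j.val = p + 1))] at this
  rw [vA, vB, vC, vD]
  by_cases hOff : ∀ j : Fin M, j.val ≠ p → j.val ≠ p + 1 → j.val ≠ q → j.val ≠ q + 1 → γ j = δ j <;>
    simp [hOff] <;> ring

section Assembly
variable {n d : ℕ}

abbrev Mat (d M : ℕ) := Matrix (Word d M) (Word d M) K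

lemma prod_split {M : ℕ} (F : ℕ → Mat d M) {k N : ℕ} (h : k ≤ N) :
    ((List.range N).reverse.map F).prod =
      (((List.range' k (N - k)).reverse.map F).prod) * ((List.range k).reverse.map F).prod := by
  have hsplit : List.range N = List.range k ++ List.range' k (N - k) := by
    rw [List.range_eq_range', List.range_eq_range']
    have h0 : List.range' 0 k 1 ++ List.range' (0 + 1 * k) (N - k) 1 = List.range' 0 (N - k + k) 1 := by
      rw [List.range'_append, Nat.add_comm k (N - k)]
    simp only [Nat.zero_add, Nat.one_mul] at h0
    have h2 : N - k + k = N := by omega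
    rw [h2] at h0
    exact h0.symm
  rw [hsplit, List.reverse_append, List.map_append, List.prod_append]

lemma prod_front {M : ℕ} (F : ℕ → Mat d M) (k : ℕ) :
    ((List.range (k + 1)).reverse.map F).prod = F k * ((List.range k).reverse.map F).prod := by
  rw [List.range_succ, List.reverse_append, List.map_append, List.prod_append]
  simp

lemma passChain {M : ℕ} (R : ℕ → Mat d M) (C C' : ℕ → Mat d M) :
    ∀ (len k : ℕ), (∀ b, k ≤ b → b < k + len → R b * C b = C' b * R (b + 1)) →
      R k * ((List.range' k len).map C).prod = ((List.range' k len).map C').prod * R (k + len)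
  | 0, k, _ => by simp
  | (len + 1), k, h => by
    rw [List.range'_succ, List.map_cons, List.prod_cons, List.map_cons, List.prod_cons,
      ← mul_assoc, h k le_rfl (by omega), mul_assoc, passChain R C C' len (k + 1)
        (fun b hb1 hb2 => h b (by omega) (by omega)), ← mul_assoc,
      show k + 1 + len = k + (len + 1) by omega]

lemma interleave {M : ℕ} (F G : ℕ → Mat d M) :
    ∀ len : ℕ, (∀ a a', a' < a → a < len → Commute (G a) (F a')) →
      ((List.range len).reverse.map F).prod * ((List.range len).reverse.map G).prod
      = ((List.range len).reverse.map (fun a => F a * G a)).prod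
  | 0, _ => by simp
  | (len + 1), hcomm => by
    rw [prod_front, prod_front, prod_front]
    have hc : Commute (G len) (((List.range len).reverse.map F).prod) := by
      apply Commute.list_prod_right
      intro x hx
      obtain ⟨a, ha, rfl⟩ := List.mem_map.1 hx
      have : a < len := by
        have := List.mem_reverse.1 ha
        exact List.mem_range.1 this
      exact hcomm len a this (by omega)
    calc F len * ((List.range len).reverse.map F).prod * (G len * ((List.range len).reverse.map G).prod)
        = F len * (((List.range len).reverse.map F).prod * G len) * ((List.range len).reverse.map G).prod := by
          simp only [mul_assoc]
      _ = F len * (G len * ((List.range len).reverse.map F).prod) * ((List.range len).reverse.map G).prod := by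
          rw [← hc.eq]
      _ = (F len * G len) * (((List.range len).reverse.map F).prod * ((List.range len).reverse.map G).prod) := by
          simp only [mul_assoc]
      _ = (F len * G len) * ((List.range len).reverse.map (fun a => F a * G a)).prod := by
          rw [interleave F G len (fun a a' h1 h2 => hcomm a a' h1 (by omega))]

set_option maxHeartbeats 1000000 in

lemma intPass {M : ℕ} (F G F' G' R : ℕ → Mat d M) :
    ∀ len : ℕ, (∀ a, a < len → F a * G a * R a = R (a + 1) * F' a * G' a) →
      ((List.range len).reverse.map (fun a => F a * G a)).prod * R 0
      = R len * ((List.range len).reverse.map (fun a => F' a * G' a)).prod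
  | 0, _ => by simp
  | (len + 1), hybe => by
    rw [prod_front, prod_front]
    calc (F len * G len) * ((List.range len).reverse.map (fun a => F a * G a)).prod * R 0
        = (F len * G len) * (((List.range len).reverse.map (fun a => F a * G a)).prod * R 0) := by
          simp only [mul_assoc]
      _ = (F len * G len) * (R len * ((List.range len).reverse.map (fun a => F' a * G' a)).prod) := by
          rw [intPass F G F' G' R len (fun a ha => hybe a (by omega))]
      _ = ((F len * G len) * R len) * ((List.range len).reverse.map (fun a => F' a * G' a)).prod := by
          simp only [mul_assoc]
      _ = (R (len + 1) * F' len * G' len) * ((List.range len).reverse.map (fun a => F' a * G' a)).prod := by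
          rw [hybe len (by omega)]
      _ = R (len + 1) * ((F' len * G' len) * ((List.range len).reverse.map (fun a => F' a * G' a)).prod) := by
          simp only [mul_assoc]

end Assembly

lemma div_chain (a b c : K) (hb : b ≠ 0) : a / b * (b / c) = a / c := by
  rw [div_mul_div_comm, mul_comm a b, mul_div_mul_left _ _ hb]

set_option maxHeartbeats 2000000 in

lemma colPass {n d N : ℕ} {x x' y : ℕ → K} {w : K} {j b : ℕ}
    (hj : j + 2 ≤ N) (hb : b < N)
    (hybe : Rop n d (N + N) (b + j) w * Rop n d (N + N) (b + (j + 1)) (x (j + 1) / y b) *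
        Rop n d (N + N) (b + j) (x j / y b) =
      Rop n d (N + N) (b + (j + 1)) (x j / y b) * Rop n d (N + N) (b + j) (x (j + 1) / y b) *
        Rop n d (N + N) (b + (j + 1)) w)
    (hx'a : ∀ a, ¬ a = j → ¬ a = j + 1 → x' a = x a) (hx'j : x' j = x (j + 1))
    (hx'j1 : x' (j + 1) = x j) :
    Rop n d (N + N) (b + j) w * Cop n d N N x y b =
      Cop n d N N x' y b * Rop n d (N + N) (b + (j + 1)) w := by
  unfold Cop
  rw [prod_split (fun a => Rop n d (N + N) (b + a) (x a / y b)) hj,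
    prod_split (fun a => Rop n d (N + N) (b + a) (x' a / y b)) hj,
    prod_front, prod_front, prod_front, prod_front]
  have hU : ((List.range' (j + 2) (N - (j + 2))).reverse.map
        fun a => Rop n d (N + N) (b + a) (x' a / y b)).prod =
      ((List.range' (j + 2) (N - (j + 2))).reverse.map
        fun a => Rop n d (N + N) (b + a) (x a / y b)).prod := by
    congr 1
    apply List.map_congr_left
    intro a ha
    have ha' : j + 2 ≤ a := by
      have := List.mem_range'_1.1 (List.mem_reverse.1 ha)
      omega
    rw [hx'a a (by omega) (by omega)]
  have hL : ((List.range j).reverse.map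
        fun a => Rop n d (N + N) (b + a) (x' a / y b)).prod =
      ((List.range j).reverse.map
        fun a => Rop n d (N + N) (b + a) (x a / y b)).prod := by
    congr 1
    apply List.map_congr_left
    intro a ha
    have ha' : a < j := List.mem_range.1 (List.mem_reverse.1 ha)
    rw [hx'a a (by omega) (by omega)]
  rw [hU, hL, hx'j, hx'j1]
  set R1 := Rop n d (N + N) (b + j) w with hR1
  set R2 := Rop n d (N + N) (b + (j + 1)) w with hR2
  set U := ((List.range' (j + 2) (N - (j + 2))).reverse.map
    fun a => Rop n d (N + N) (b + a) (x a / y b)).prod with hUdef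
  set L := ((List.range j).reverse.map fun a => Rop n d (N + N) (b + a) (x a / y b)).prod with hLdef
  have hcU : Commute R1 U := by
    apply Commute.list_prod_right
    intro m hm
    obtain ⟨a, ha, rfl⟩ := List.mem_map.1 hm
    have ha' := List.mem_range'_1.1 (List.mem_reverse.1 ha)
    exact Rop_comm w (x a / y b) (by omega) (by omega)
  have hcL : Commute R2 L := by
    apply Commute.list_prod_right
    intro m hm
    obtain ⟨a, ha, rfl⟩ := List.mem_map.1 hm
    have ha' : a < j := List.mem_range.1 (List.mem_reverse.1 ha)
    exact (Rop_comm (x a / y b) w (by omega) (by omega)).symm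
  calc R1 * (U * (Rop n d (N + N) (b + (j + 1)) (x (j + 1) / y b) *
        (Rop n d (N + N) (b + j) (x j / y b) * L)))
      = U * ((R1 * Rop n d (N + N) (b + (j + 1)) (x (j + 1) / y b) *
          Rop n d (N + N) (b + j) (x j / y b)) * L) := by
        rw [← mul_assoc, hcU.eq]
        simp only [mul_assoc]
    _ = U * ((Rop n d (N + N) (b + (j + 1)) (x j / y b) *
          Rop n d (N + N) (b + j) (x (j + 1) / y b) * R2) * L) := by rw [hybe]
    _ = U * (Rop n d (N + N) (b + (j + 1)) (x j / y b) *
          (Rop n d (N + N) (b + j) (x (j + 1) / y b) * (R2 * L))) := by simp only [mul_assoc]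
    _ = U * (Rop n d (N + N) (b + (j + 1)) (x j / y b) *
          (Rop n d (N + N) (b + j) (x (j + 1) / y b) * (L * R2))) := by rw [hcL.eq]
    _ = U * (Rop n d (N + N) (b + (j + 1)) (x j / y b) *
          (Rop n d (N + N) (b + j) (x (j + 1) / y b) * L)) * R2 := by simp only [mul_assoc]

set_option maxHeartbeats 2000000 in

lemma twoColPass {n d N : ℕ} (x y y' : ℕ → K) {u : K} (j : ℕ) (hj : j + 2 ≤ N)
    (hybe : ∀ a, a < N →
      Rop n d (N + N) (j + a) (x a / y j) * Rop n d (N + N) (j + a + 1) (x a / y (j + 1)) *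
        Rop n d (N + N) (j + a) u =
      Rop n d (N + N) (j + a + 1) u * Rop n d (N + N) (j + a) (x a / y (j + 1)) *
        Rop n d (N + N) (j + a + 1) (x a / y j))
    (hy'j : y' j = y (j + 1)) (hy'j1 : y' (j + 1) = y j) :
    Cop n d N N x y j * Cop n d N N x y (j + 1) * Rop n d (N + N) j u
      = Rop n d (N + N) (N + j) u * (Cop n d N N x y' j * Cop n d N N x y' (j + 1)) := by
  have hcomm : ∀ (v : ℕ → K) a a', a' < a → a < N →
      Commute (Rop n d (N + N) (j + a + 1) (x a / v (j + 1)))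
        (Rop n d (N + N) (j + a') (x a' / v j)) := by
    intro v a a' h1 h2
    exact (Rop_comm (x a' / v j) (x a / v (j + 1)) (by omega) (by omega)).symm
  have hC2 : ∀ v : ℕ → K, Cop n d N N x v (j + 1) =
      ((List.range N).reverse.map fun a => Rop n d (N + N) (j + a + 1) (x a / v (j + 1))).prod := by
    intro v
    unfold Cop
    congr 1
    apply List.map_congr_left
    intro a _
    rw [show j + 1 + a = j + a + 1 by omega]
  have hC1 : ∀ v : ℕ → K, Cop n d N N x v j =
      ((List.range N).reverse.map fun a => Rop n d (N + N) (j + a) (x a / v j)).prod := fun v => rfl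
  rw [hC1 y, hC2 y, hC1 y', hC2 y',
    interleave (fun a => Rop n d (N + N) (j + a) (x a / y j))
      (fun a => Rop n d (N + N) (j + a + 1) (x a / y (j + 1))) N (hcomm y),
    interleave (fun a => Rop n d (N + N) (j + a) (x a / y' j))
      (fun a => Rop n d (N + N) (j + a + 1) (x a / y' (j + 1))) N (hcomm y')]
  have E := intPass (fun a => Rop n d (N + N) (j + a) (x a / y j))
    (fun a => Rop n d (N + N) (j + a + 1) (x a / y (j + 1)))
    (fun a => Rop n d (N + N) (j + a) (x a / y (j + 1)))
    (fun a => Rop n d (N + N) (j + a + 1) (x a / y j))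
    (fun a => Rop n d (N + N) (j + a) u) N hybe
  simp only [Nat.add_zero] at E
  rw [show j + N = N + j by omega] at E
  rw [E]
  congr 1
  congr 1
  apply List.map_congr_left
  intro a _
  rw [hy'j, hy'j1]

lemma algmap_inj : Function.Injective (algebraMap (MvPolynomial ℕ ℚ) K) :=
  IsFractionRing.injective _ _

lemma vr_ne_zero (i : ℕ) : vr i ≠ 0 := by
  unfold vr
  rw [← (algebraMap (MvPolynomial ℕ ℚ) K).map_zero]
  intro h
  exact MvPolynomial.X_ne_zero i (algmap_inj h)

lemma one_sub_ne' {i j : ℕ} (hi : i ≠ 1) (hj : j ≠ 1) (hij : i ≠ j) :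
    1 - tv * (vr i / vr j) ≠ 0 := by
  have hj0 := vr_ne_zero j
  intro h
  have h2 : vr j = tv * vr i := by
    field_simp at h
    linear_combination h
  unfold tv vr at h2
  rw [← map_mul] at h2
  have h3 := algmap_inj h2
  have := congrArg (MvPolynomial.eval fun k => if k = j then (1 : ℚ) else 0) h3
  simp [hj.symm, if_neg (by omega : ¬ (1 = j))] at this

set_option maxHeartbeats 2000000 in

/-- Exchange relations for `Z_N(x;y)` (paper's `Ř_i` acting on
factors `i,i+1` in 1-based conventions is `Rop` at 0-based position `i-1`):
`Ř_i(x_{i+1}/x_i) Z_N(x;y) = Z_N(…x_{i+1},x_i…;y) Ř_{N+i}(x_{i+1}/x_i)` and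
`Z_N(x;y) Ř_i(y_i/y_{i+1}) = Ř_{N+i}(y_i/y_{i+1}) Z_N(x;…y_{i+1},y_i…)`. -/
theorem statement9 (N n m : ℕ) (hN : 2 ≤ N) (hnm : 1 ≤ n + m)
    (i : ℕ) (h1 : 1 ≤ i) (hi : i ≤ N - 1) :
    Rop n (n + m) (N + N) (i - 1) (xg i / xg (i - 1)) * Zop n (n + m) N N xg (yg N) =
        Zop n (n + m) N N (swapF xg (i - 1) i) (yg N) *
          Rop n (n + m) (N + N) (N + i - 1) (xg i / xg (i - 1)) ∧
      Zop n (n + m) N N xg (yg N) * Rop n (n + m) (N + N) (i - 1) (yg N (i - 1) / yg N i) =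
        Rop n (n + m) (N + N) (N + i - 1) (yg N (i - 1) / yg N i) *
          Zop n (n + m) N N xg (swapF (yg N) (i - 1) i) := by
  obtain ⟨j, rfl⟩ : ∃ j, i = j + 1 := ⟨i - 1, by omega⟩
  have hj2 : j + 2 ≤ N := by omega
  simp only [Nat.add_sub_cancel]
  rw [show N + (j + 1) - 1 = N + j from by omega]
  constructor
  · -- x-exchange
    have hchain : ∀ b, 0 ≤ b → b < 0 + N →
        Rop n (n + m) (N + N) (b + j) (xg (j + 1) / xg j) * Cop n (n + m) N N xg (yg N) b =
          Cop n (n + m) N N (swapF xg j (j + 1)) (yg N) b *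
            Rop n (n + m) (N + N) (b + 1 + j) (xg (j + 1) / xg j) := by
      intro b _ hb
      have hcp := colPass (n := n) (d := n + m) (x := xg) (x' := swapF xg j (j + 1))
        (y := yg N) (w := xg (j + 1) / xg j) (j := j) (b := b) hj2 (by omega)
        ?_ ?_ ?_ ?_
      · rw [show b + (j + 1) = b + 1 + j from by omega] at hcp
        exact hcp
      · have hz1 : 1 - tv * (xg (j + 1) / xg j) ≠ 0 :=
          one_sub_ne' (by omega) (by omega) (by omega)
        have hz3 : 1 - tv * (xg j / yg N b) ≠ 0 :=
          one_sub_ne' (by omega) (by omega) (by omega)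
        have hmul : xg (j + 1) / xg j * (xg j / yg N b) = xg (j + 1) / yg N b :=
          div_chain _ _ _ (vr_ne_zero _)
        have hz2 : 1 - tv * (xg (j + 1) / xg j * (xg j / yg N b)) ≠ 0 := by
          rw [hmul]
          exact one_sub_ne' (by omega) (by omega) (by omega)
        have hy := word_ybe (n := n) (d := n + m) (M := N + N) (p := b + j)
          (u₁ := xg (j + 1) / xg j) (u₃ := xg j / yg N b) (by omega) hz1 hz2 hz3
        rw [hmul] at hy
        rw [show b + j + 1 = b + (j + 1) from by omega] at hy
        exact hy
      · intro a ha1 ha2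
        unfold swapF
        rw [if_neg ha1, if_neg ha2]
      · unfold swapF; simp
      · unfold swapF; simp
    have hZ := passChain (fun b => Rop n (n + m) (N + N) (b + j) (xg (j + 1) / xg j))
      (Cop n (n + m) N N xg (yg N)) (Cop n (n + m) N N (swapF xg j (j + 1)) (yg N)) N 0 hchain
    simp only [Nat.zero_add] at hZ
    unfold Zop
    rw [List.range_eq_range']
    exact hZ
  · -- y-exchange
    have hy'j : swapF (yg N) j (j + 1) j = yg N (j + 1) := by unfold swapF; simp
    have hy'j1 : swapF (yg N) j (j + 1) (j + 1) = yg N j := by unfold swapF; simp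
    have hybe2 : ∀ a, a < N →
        Rop n (n + m) (N + N) (j + a) (xg a / yg N j) *
            Rop n (n + m) (N + N) (j + a + 1) (xg a / yg N (j + 1)) *
            Rop n (n + m) (N + N) (j + a) (yg N j / yg N (j + 1)) =
          Rop n (n + m) (N + N) (j + a + 1) (yg N j / yg N (j + 1)) *
            Rop n (n + m) (N + N) (j + a) (xg a / yg N (j + 1)) *
            Rop n (n + m) (N + N) (j + a + 1) (xg a / yg N j) := by
      intro a ha
      have hz1 : 1 - tv * (xg a / yg N j) ≠ 0 := one_sub_ne' (by omega) (by omega) (by omega)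
      have hz3 : 1 - tv * (yg N j / yg N (j + 1)) ≠ 0 :=
        one_sub_ne' (by omega) (by omega) (by omega)
      have hmul : xg a / yg N j * (yg N j / yg N (j + 1)) = xg a / yg N (j + 1) :=
        div_chain _ _ _ (vr_ne_zero _)
      have hz2 : 1 - tv * (xg a / yg N j * (yg N j / yg N (j + 1))) ≠ 0 := by
        rw [hmul]
        exact one_sub_ne' (by omega) (by omega) (by omega)
      have hy := word_ybe (n := n) (d := n + m) (M := N + N) (p := j + a)
        (u₁ := xg a / yg N j) (u₃ := yg N j / yg N (j + 1)) (by omega) hz1 hz2 hz3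
      rw [hmul] at hy
      exact hy
    have htwo := twoColPass xg (yg N) (swapF (yg N) j (j + 1)) j hj2 hybe2 hy'j hy'j1
    have hzdec : ∀ v : ℕ → K, Zop n (n + m) N N xg v =
        ((List.range j).map (Cop n (n + m) N N xg v)).prod *
          (Cop n (n + m) N N xg v j * (Cop n (n + m) N N xg v (j + 1) *
            ((List.range' (j + 2) (N - (j + 2))).map (Cop n (n + m) N N xg v)).prod)) := by
      intro v
      unfold Zop
      have hsplit : List.range N =
          List.range j ++ j :: (j + 1) :: List.range' (j + 2) (N - (j + 2)) := by
        rw [List.range_eq_range']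
        have h0 : List.range' 0 j 1 ++ List.range' (0 + 1 * j) (N - j) 1 = List.range' 0 (N - j + j) 1 := by
          rw [List.range'_append, Nat.add_comm j (N - j)]
        simp only [Nat.zero_add, Nat.one_mul] at h0
        have h2 : N - j + j = N := by omega
        rw [h2] at h0
        rw [← h0]
        congr 1
        · exact (List.range_eq_range' (n := j)).symm
        · rw [show N - j = (N - (j + 2)) + 1 + 1 from by omega, List.range'_succ,
            List.range'_succ, show j + 1 + 1 = j + 2 from by omega]
      rw [hsplit]
      simp only [List.map_append, List.prod_append, List.map_cons, List.prod_cons]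
    rw [hzdec (yg N), hzdec (swapF (yg N) j (j + 1))]
    have hPL : ((List.range j).map (Cop n (n + m) N N xg (swapF (yg N) j (j + 1)))).prod =
        ((List.range j).map (Cop n (n + m) N N xg (yg N))).prod := by
      congr 1
      apply List.map_congr_left
      intro b hb
      have hbj : b < j := List.mem_range.1 hb
      unfold Cop
      congr 1
      apply List.map_congr_left
      intro a _
      unfold swapF
      rw [if_neg (by omega), if_neg (by omega)]
    have hPR : ((List.range' (j + 2) (N - (j + 2))).map
          (Cop n (n + m) N N xg (swapF (yg N) j (j + 1)))).prod =
        ((List.range' (j + 2) (N - (j + 2))).map (Cop n (n + m) N N xg (yg N))).prod := by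
      congr 1
      apply List.map_congr_left
      intro b hb
      have hbj := List.mem_range'_1.1 hb
      unfold Cop
      congr 1
      apply List.map_congr_left
      intro a _
      unfold swapF
      rw [if_neg (by omega), if_neg (by omega)]
    rw [hPL, hPR]
    have hcPR : Commute (Rop n (n + m) (N + N) j (yg N j / yg N (j + 1)))
        (((List.range' (j + 2) (N - (j + 2))).map (Cop n (n + m) N N xg (yg N))).prod) := by
      apply Commute.list_prod_right
      intro mC hmC
      obtain ⟨b, hb, rfl⟩ := List.mem_map.1 hmC
      have hb' := List.mem_range'_1.1 hb
      unfold Cop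
      apply Commute.list_prod_right
      intro mR hmR
      obtain ⟨a, ha, rfl⟩ := List.mem_map.1 hmR
      have ha' : a < N := List.mem_range.1 (List.mem_reverse.1 ha)
      exact Rop_comm _ _ (by omega) (by omega)
    have hcPL : Commute (Rop n (n + m) (N + N) (N + j) (yg N j / yg N (j + 1)))
        (((List.range j).map (Cop n (n + m) N N xg (yg N))).prod) := by
      apply Commute.list_prod_right
      intro mC hmC
      obtain ⟨b, hb, rfl⟩ := List.mem_map.1 hmC
      have hb' : b < j := List.mem_range.1 hb
      unfold Cop
      apply Commute.list_prod_right
      intro mR hmR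
      obtain ⟨a, ha, rfl⟩ := List.mem_map.1 hmR
      have ha' : a < N := List.mem_range.1 (List.mem_reverse.1 ha)
      exact (Rop_comm _ _ (by omega) (by omega)).symm
    set R0 := Rop n (n + m) (N + N) j (yg N j / yg N (j + 1)) with hR0
    set RN := Rop n (n + m) (N + N) (N + j) (yg N j / yg N (j + 1)) with hRN
    set PL := ((List.range j).map (Cop n (n + m) N N xg (yg N))).prod with hPLd
    set PR := ((List.range' (j + 2) (N - (j + 2))).map (Cop n (n + m) N N xg (yg N))).prod with hPRd
    set C1 := Cop n (n + m) N N xg (yg N) j with hC1d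
    set C2 := Cop n (n + m) N N xg (yg N) (j + 1) with hC2d
    set C1' := Cop n (n + m) N N xg (swapF (yg N) j (j + 1)) j with hC1'd
    set C2' := Cop n (n + m) N N xg (swapF (yg N) j (j + 1)) (j + 1) with hC2'd
    calc PL * (C1 * (C2 * PR)) * R0
        = PL * (C1 * (C2 * (PR * R0))) := by simp only [mul_assoc]
      _ = PL * (C1 * (C2 * (R0 * PR))) := by rw [← hcPR.eq]
      _ = PL * ((C1 * C2 * R0) * PR) := by simp only [mul_assoc]
      _ = PL * ((RN * (C1' * C2')) * PR) := by rw [htwo]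
      _ = PL * (RN * (C1' * (C2' * PR))) := by simp only [mul_assoc]
      _ = RN * (PL * (C1' * (C2' * PR))) := by
          rw [← mul_assoc, ← hcPL.eq, mul_assoc]

end ConicVertex
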